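/- Let D ≥ 1 be an integer, g_c := D^D/(D+1)^{D+1}, and define the leading-order free energy E_LO(g) := Σ_{p≥1} (C_p^{(D+1)}/p)·g^p for 0 ≤ g < g_c, where C_p^{(D+1)} := (1/((D+1)p+1))·binom((D+1)p+1, p); this function satisfies g·E_LO'(g) = G_LO(g) − 1. Then lim_{g→g_c⁻} √(1 − g/g_c) · E_LO''(g) = (1/g_c)·((D+1)/D)^{D+2}·√(D/(2(D+1))); i.e., the leading-order free energy has critical behaviour (1 − g/g_c)^{2 − γ} with susceptibility exponent γ_LO = 1/2. -/

import Mathlib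

open Finset Filter Set

set_option maxHeartbeats 1000000



open Finset

/-- Coefficients of `B^a` where `B = 1 + z B^b` is the generalized binomial series. -/
noncomputable def fcA (b a k : ℕ) : ℝ :=
  if k = 0 then 1 else (a : ℝ) / ((a : ℝ) + b * k) * ((a + b * k).choose k : ℝ)

lemma fcA_zero (b a : ℕ) : fcA b a 0 = 1 := by simp [fcA]

lemma fcA_zero_left (b k : ℕ) (hk : k ≠ 0) : fcA b 0 k = 0 := by simp [fcA, hk]

lemma fcA_nonneg (b a k : ℕ) : 0 ≤ fcA b a k := by
  unfold fcA
  split_ifs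
  · norm_num
  · positivity

lemma fcA_rec (b a k : ℕ) (hb : 1 ≤ b) :
    fcA b (a + 1) (k + 1) = fcA b a (k + 1) + fcA b (a + b) k := by
  have hb' : (1 : ℝ) ≤ (b : ℝ) := by exact_mod_cast hb
  rcases Nat.eq_zero_or_pos k with rfl | hk
  · -- k = 0
    simp only [fcA, if_neg (Nat.one_ne_zero), if_pos rfl]
    rw [Nat.choose_one_right, Nat.choose_one_right]
    push_cast
    have h1 : ((a : ℝ) + 1) + b * 1 ≠ 0 := by positivity
    have h2 : (a : ℝ) + b * 1 ≠ 0 := by positivity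
    field_simp
  · have hk0 : k ≠ 0 := by omega
    simp only [fcA, if_neg hk0, if_neg (Nat.succ_ne_zero k)]
    have hNnat : (a + b) + b * k = a + b * (k+1) := by ring
    rw [hNnat]
    set N : ℕ := a + b * (k + 1) with hN
    have hkN : k ≤ N := by nlinarith
    have hC1 : ((a+1) + b * (k+1)) = N + 1 := by omega
    rw [hC1]
    have hsucc : (N+1).choose (k+1) = N.choose k + N.choose (k+1) :=
      Nat.choose_succ_succ' N k
    rw [hsucc]
    have hrel : (N.choose (k+1) : ℝ) * ((k:ℝ)+1) = (N.choose k : ℝ) * ((N : ℝ) - k) := by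
      have h := congrArg (Nat.cast : ℕ → ℝ) (Nat.choose_succ_right_eq N k)
      push_cast [hkN] at h
      linarith [h]
    have hkpos : (0:ℝ) < (k:ℝ)+1 := by positivity
    have hY : (N.choose (k+1) : ℝ) = (N.choose k : ℝ) * ((N : ℝ) - k) / ((k:ℝ)+1) :=
      eq_div_of_mul_eq (ne_of_gt hkpos) hrel
    have hd1 : ((a:ℝ)+1) + (b:ℝ) * ((k:ℝ)+1) = (N:ℝ) + 1 := by
      rw [hN]; push_cast; ring
    have hd2 : (a:ℝ) + (b:ℝ) * ((k:ℝ)+1) = (N:ℝ) := by rw [hN]; push_cast; ring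
    have hNreal : (N : ℝ) = a + b * (k+1) := by rw [hN]; push_cast; ring
    have hNpos : (0:ℝ) < (N:ℝ) := by nlinarith [Nat.cast_nonneg (α := ℝ) a]
    push_cast
    rw [hd1, hd2, hY, hNreal]
    have e1 : (a:ℝ) + (b:ℝ)*((k:ℝ)+1) ≠ 0 := by rw [← hNreal] at *; exact ne_of_gt hNpos
    have e2 : (a:ℝ) + (b:ℝ)*((k:ℝ)+1) + 1 ≠ 0 := by
      rw [← hNreal] at *; positivity
    field_simp
    ring

lemma fcA_conv (b : ℕ) (hb : 1 ≤ b) :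
    ∀ n a c, ∑ k ∈ range (n+1), fcA b a k * fcA b c (n - k) = fcA b (a + c) n := by
  intro n
  induction n using Nat.strong_induction_on with
  | _ n ih =>
    intro a c
    induction a with
    | zero =>
      rw [Finset.sum_eq_single 0]
      · simp [fcA_zero]
      · intro k _ hk
        rw [fcA_zero_left b k hk, zero_mul]
      · intro h; exact absurd (Finset.mem_range.mpr (Nat.succ_pos n)) h
    | succ a iha =>
      rcases n with _ | m
      · simp [fcA_zero]
      · rw [Finset.sum_range_succ']
        have hstep : ∀ k ∈ range (m+1),
            fcA b (a+1) (k+1) * fcA b c (m+1 - (k+1))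
            = fcA b a (k+1) * fcA b c (m - k) + fcA b (a+b) k * fcA b c (m - k) := by
          intro k _
          rw [Nat.succ_sub_succ, fcA_rec b a k hb, add_mul]
        rw [Finset.sum_congr rfl hstep, Finset.sum_add_distrib]
        have h2 : ∑ k ∈ range (m+1), fcA b (a+b) k * fcA b c (m - k)
            = fcA b (a + b + c) m := ih m (by omega) (a+b) c
        have h1 : (∑ k ∈ range (m+1), fcA b a (k+1) * fcA b c (m - k))
              + fcA b (a+1) 0 * fcA b c (m+1)
            = fcA b (a + c) (m+1) := by
          rw [fcA_zero, one_mul, ← iha]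
          conv_rhs => rw [Finset.sum_range_succ']
          rw [fcA_zero, one_mul, Nat.sub_zero]
          congr 1
          apply Finset.sum_congr rfl
          intro k _
          rw [Nat.succ_sub_succ]
        calc (∑ k ∈ range (m+1), fcA b a (k+1) * fcA b c (m - k))
              + (∑ k ∈ range (m+1), fcA b (a+b) k * fcA b c (m - k))
              + fcA b (a+1) 0 * fcA b c (m+1)
            = (fcA b (a+c) (m+1)) + fcA b (a+b+c) m := by
              rw [h2, ← h1, fcA_zero]; ring
          _ = fcA b (a + 1 + c) (m+1) := by
              have := fcA_rec b (a+c) m hb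
              rw [show a + 1 + c = a + c + 1 by ring, this, show a + c + b = a + b + c by ring]


lemma fcA_one_succ (b k : ℕ) (hb : 1 ≤ b) : fcA b 1 (k+1) = fcA b b k := by
  rcases Nat.eq_zero_or_pos k with rfl | hk
  · simp only [fcA, if_neg (Nat.one_ne_zero), if_pos rfl]
    rw [Nat.choose_one_right]
    push_cast
    have : (1:ℝ) + b * 1 ≠ 0 := by positivity
    field_simp
  · have hk0 : k ≠ 0 := by omega
    simp only [fcA, if_neg hk0, if_neg (Nat.succ_ne_zero k)]
    set N : ℕ := b + b * k with hN
    have h1 : 1 + b * (k+1) = N + 1 := by rw [hN]; ring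
    rw [h1]
    have hid := congrArg (Nat.cast : ℕ → ℝ) (Nat.add_one_mul_choose_eq N k)
    push_cast at hid
    -- hid : (N+1) * N.choose k = (N+1).choose (k+1) * (k+1)
    have hNpos : (0:ℝ) < (N:ℝ) := by
      have : 1 ≤ b * k := Nat.one_le_iff_ne_zero.mpr (by positivity)
      have : 1 ≤ N := by omega
      exact_mod_cast Nat.lt_of_lt_of_le Nat.zero_lt_one this
    have hbr : (0:ℝ) < (b:ℝ) := by exact_mod_cast hb
    have hNr : (N:ℝ) = b + b * k := by rw [hN]; push_cast; ring
    rw [← hNr]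
    have hkpos : (0:ℝ) < (k:ℝ) + 1 := by positivity
    have hN1 : (0:ℝ) < (N:ℝ) + 1 := by linarith
    have hNb : (N:ℝ) = (b:ℝ)*((k:ℝ)+1) := by rw [hNr]; ring
    field_simp
    push_cast
    linear_combination (((N+1).choose (k+1) : ℝ) + (b:ℝ) * (N.choose k : ℝ)) * hNb
      - (b:ℝ) * hid

/-- The Fuss–Catalan number `C_p^(D+1) = (1/((D+1)p+1))·binom((D+1)p+1, p)`, as a real number. -/
noncomputable def fussCatalan (D p : ℕ) : ℝ :=
  (1 / (((D + 1) * p + 1 : ℕ) : ℝ)) * (Nat.choose ((D + 1) * p + 1) p : ℝ)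

lemma fussCatalan_eq_fcA (D p : ℕ) : fussCatalan D p = fcA (D+1) 1 p := by
  rcases Nat.eq_zero_or_pos p with rfl | hp
  · simp [fussCatalan, fcA]
  · have hp0 : p ≠ 0 := by omega
    simp only [fussCatalan, fcA, if_neg hp0]
    have h1 : (D+1) * p + 1 = 1 + (D+1) * p := by ring
    rw [h1]
    push_cast
    ring


lemma fcA_antidiagonal (b : ℕ) (hb : 1 ≤ b) (a c n : ℕ) (g : ℝ) :
    ∑ kl ∈ Finset.HasAntidiagonal.antidiagonal n,
        (fcA b a kl.1 * g ^ kl.1) * (fcA b c kl.2 * g ^ kl.2)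
      = fcA b (a + c) n * g ^ n := by
  rw [Finset.Nat.sum_antidiagonal_eq_sum_range_succ_mk, ← fcA_conv b hb n a c, Finset.sum_mul]
  apply Finset.sum_congr rfl
  intro k hk
  have hk' : k ≤ n := by simpa [Nat.lt_succ_iff] using hk
  have hpow : g ^ k * g ^ (n - k) = g ^ n := by rw [← pow_add]; congr 1; omega
  calc fcA b a k * g ^ k * (fcA b c (n - k) * g ^ (n - k))
      = fcA b a k * fcA b c (n - k) * (g ^ k * g ^ (n - k)) := by ring
    _ = fcA b a k * fcA b c (n - k) * g ^ n := by rw [hpow]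

lemma fcA_conv_pairs (b : ℕ) (hb : 1 ≤ b) (a c N : ℕ) (g : ℝ) (hg : 0 ≤ g) :
    ∑ k ∈ range N, fcA b (a + c) k * g ^ k
      ≤ (∑ k ∈ range N, fcA b a k * g ^ k) * (∑ k ∈ range N, fcA b c k * g ^ k) := by
  rw [Finset.sum_mul_sum]
  calc ∑ n ∈ range N, fcA b (a + c) n * g ^ n
      = ∑ n ∈ range N, ∑ kl ∈ Finset.HasAntidiagonal.antidiagonal n,
          (fcA b a kl.1 * g ^ kl.1) * (fcA b c kl.2 * g ^ kl.2) :=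
        Finset.sum_congr rfl fun n _ => (fcA_antidiagonal b hb a c n g).symm
    _ = ∑ kl ∈ (range N).biUnion Finset.HasAntidiagonal.antidiagonal,
          (fcA b a kl.1 * g ^ kl.1) * (fcA b c kl.2 * g ^ kl.2) := by
        rw [Finset.sum_biUnion]
        intro x hx y hy hxy
        apply Finset.disjoint_left.mpr
        intro p hp hp'
        exact hxy (by
          rw [Finset.HasAntidiagonal.mem_antidiagonal] at hp hp'
          omega)
    _ ≤ ∑ kl ∈ range N ×ˢ range N,
          (fcA b a kl.1 * g ^ kl.1) * (fcA b c kl.2 * g ^ kl.2) := by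
        apply Finset.sum_le_sum_of_subset_of_nonneg
        · intro p hp
          rw [Finset.mem_biUnion] at hp
          obtain ⟨n, hn, hpn⟩ := hp
          rw [Finset.mem_range] at hn
          have h1 := Finset.HasAntidiagonal.antidiagonal.fst_le hpn
          have h2 := Finset.HasAntidiagonal.antidiagonal.snd_le hpn
          rw [Finset.mem_product, Finset.mem_range, Finset.mem_range]
          omega
        · intro p _ _
          have := fcA_nonneg b a p.1
          have := fcA_nonneg b c p.2
          positivity
    _ = ∑ i ∈ range N, ∑ j ∈ range N,
          (fcA b a i * g ^ i) * (fcA b c j * g ^ j) := Finset.sum_product _ _ _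

lemma key_hasSum (D : ℕ) (hD : 1 ≤ D) (g X : ℝ) (hg0 : 0 ≤ g)
    (hglt : g < (D : ℝ) ^ D / ((D : ℝ) + 1) ^ (D + 1)) (hX1 : 1 ≤ X)
    (hX2 : X ≤ ((D : ℝ) + 1) / D) (hXeq : X = 1 + g * X ^ (D + 1)) :
    HasSum (fun k => fcA (D + 1) 1 k * g ^ k) X := by
  have hb : 1 ≤ D + 1 := by omega
  set b := D + 1 with hbdef
  have hDpos : (0 : ℝ) < D := by exact_mod_cast hD
  have hterm0 : ∀ m k, (0:ℝ) ≤ fcA b m k * g ^ k := fun m k =>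
    mul_nonneg (fcA_nonneg b m k) (pow_nonneg hg0 k)
  have hS0 : ∀ m N, (0 : ℝ) ≤ ∑ k ∈ range N, fcA b m k * g ^ k := fun m N =>
    Finset.sum_nonneg fun k _ => hterm0 m k
  have hkey1 : (D : ℝ) ^ D / ((D : ℝ) + 1) ^ (D + 1) * (((D:ℝ) + 1) * (((D : ℝ) + 1) / D) ^ D) = 1 := by
    rw [div_pow, pow_succ]
    field_simp
  -- partial sums of fcA b m are ≤ (partial sums of fcA b 1)^m
  have hpowle : ∀ m N, ∑ k ∈ range N, fcA b m k * g ^ k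
      ≤ (∑ k ∈ range N, fcA b 1 k * g ^ k) ^ m := by
    intro m
    induction m with
    | zero =>
      intro N
      rw [pow_zero]
      rcases N with _ | N
      · simp
      · rw [Finset.sum_eq_single 0 (fun k _ hk => by rw [fcA_zero_left b k hk, zero_mul])
          (fun h => absurd (Finset.mem_range.mpr (Nat.succ_pos N)) h)]
        simp [fcA_zero]
    | succ m ihm =>
      intro N
      calc ∑ k ∈ range N, fcA b (m + 1) k * g ^ k
          = ∑ k ∈ range N, fcA b (1 + m) k * g ^ k := by rw [Nat.add_comm]
        _ ≤ (∑ k ∈ range N, fcA b 1 k * g ^ k) * (∑ k ∈ range N, fcA b m k * g ^ k) :=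
            fcA_conv_pairs b hb 1 m N g hg0
        _ ≤ (∑ k ∈ range N, fcA b 1 k * g ^ k) * (∑ k ∈ range N, fcA b 1 k * g ^ k) ^ m :=
            mul_le_mul_of_nonneg_left (ihm N) (hS0 1 N)
        _ = (∑ k ∈ range N, fcA b 1 k * g ^ k) ^ (m + 1) := by rw [pow_succ]; ring
  -- partial sums bounded by X
  have hbound : ∀ N, ∑ k ∈ range N, fcA b 1 k * g ^ k ≤ X := by
    intro N
    induction N with
    | zero => simpa using le_trans zero_le_one hX1
    | succ N ihN =>
      rw [Finset.sum_range_succ']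
      have e1 : ∀ k ∈ range N, fcA b 1 (k + 1) * g ^ (k + 1) = g * (fcA b b k * g ^ k) :=
        fun k _ => by rw [fcA_one_succ b k hb, pow_succ]; ring
      rw [Finset.sum_congr rfl e1, ← Finset.mul_sum, fcA_zero]
      have h2 : ∑ k ∈ range N, fcA b b k * g ^ k ≤ X ^ b :=
        le_trans (hpowle b N) (pow_le_pow_left₀ (hS0 1 N) ihN b)
      have h3 : g * (∑ k ∈ range N, fcA b b k * g ^ k) ≤ g * X ^ b :=
        mul_le_mul_of_nonneg_left h2 hg0
      simp only [pow_zero, mul_one]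
      linarith [hXeq]
  have hsummable : Summable (fun k => fcA b 1 k * g ^ k) :=
    summable_of_sum_range_le (hterm0 1) hbound
  set L := ∑' k, fcA b 1 k * g ^ k with hLdef
  have hLX : L ≤ X := hsummable.tsum_le_of_sum_range_le hbound
  have hhs : HasSum (fun k => fcA b 1 k * g ^ k) L := hsummable.hasSum
  have hnorm : ∀ m : ℕ, (fun k => ‖fcA b m k * g ^ k‖) = fun k => fcA b m k * g ^ k :=
    fun m => funext fun k => Real.norm_of_nonneg (hterm0 m k)
  have hpow : ∀ m, HasSum (fun k => fcA b m k * g ^ k) (L ^ m) := by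
    intro m
    induction m with
    | zero =>
      have h0 : HasSum (fun k => fcA b 0 k * g ^ k) ((fun k => fcA b 0 k * g ^ k) 0) :=
        hasSum_single 0 (fun k hk => by rw [fcA_zero_left b k hk, zero_mul])
      simpa [fcA_zero] using h0
    | succ m ihm =>
      have h1s : Summable (fun k => ‖fcA b 1 k * g ^ k‖) := by rw [hnorm 1]; exact hsummable
      have hms : Summable (fun k => ‖fcA b m k * g ^ k‖) := by rw [hnorm m]; exact ihm.summable
      have hcs : Summable (fun n => ∑ kl ∈ Finset.HasAntidiagonal.antidiagonal n,
          (fcA b 1 kl.1 * g ^ kl.1) * (fcA b m kl.2 * g ^ kl.2)) :=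
        (summable_norm_sum_mul_antidiagonal_of_summable_norm h1s hms).of_norm
      have hts := tsum_mul_tsum_eq_tsum_sum_antidiagonal_of_summable_norm h1s hms
      have hfe : (fun n => ∑ kl ∈ Finset.HasAntidiagonal.antidiagonal n,
          (fcA b 1 kl.1 * g ^ kl.1) * (fcA b m kl.2 * g ^ kl.2))
          = fun n => fcA b (1 + m) n * g ^ n :=
        funext fun n => fcA_antidiagonal b hb 1 m n g
      rw [hfe] at hcs hts
      have hfin : HasSum (fun n => fcA b (1 + m) n * g ^ n) (∑' n, fcA b (1 + m) n * g ^ n) :=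
        hcs.hasSum
      rw [← hts, ← hLdef, ihm.tsum_eq] at hfin
      have : (1 + m) = m + 1 := by omega
      rw [this] at hfin
      convert hfin using 1
      rw [pow_succ]; ring
  have hL1 : (1:ℝ) ≤ L := by
    have h := hsummable.sum_le_tsum (range 1) (fun k _ => hterm0 1 k)
    simpa [fcA_zero] using h
  -- functional equation for L
  have hshift : HasSum (fun k => fcA b 1 (k + 1) * g ^ (k + 1)) (L - 1) := by
    refine (hasSum_nat_add_iff (f := fun k => fcA b 1 k * g ^ k) 1).2 ?_
    convert hhs using 1
    · rfl
    simp [fcA_zero]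
  have hfe2 : (fun k => fcA b 1 (k + 1) * g ^ (k + 1)) = fun k => g * (fcA b b k * g ^ k) :=
    funext fun k => by rw [fcA_one_succ b k hb, pow_succ]; ring
  rw [hfe2] at hshift
  have hgb : HasSum (fun k => g * (fcA b b k * g ^ k)) (g * L ^ b) := (hpow b).mul_left g
  have hLeq : L = 1 + g * L ^ b := by
    have := hshift.unique hgb
    linarith
  -- uniqueness of the fixed point on [1, (D+1)/D]
  have hmono : StrictMonoOn (fun x : ℝ => x - g * x ^ b) (Set.Icc 1 (((D : ℝ) + 1) / D)) := by
    apply strictMonoOn_of_deriv_pos (convex_Icc _ _)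
    · exact (continuous_id.sub (continuous_const.mul (continuous_pow b))).continuousOn
    · intro x hx
      rw [interior_Icc, Set.mem_Ioo] at hx
      have hd : HasDerivAt (fun x : ℝ => x - g * x ^ b) (1 - g * (b * x ^ (b - 1))) x :=
        (hasDerivAt_id x).sub ((hasDerivAt_pow b x).const_mul g)
      rw [hd.deriv]
      have hbm : b - 1 = D := by omega
      rw [hbm]
      have hx0 : (0:ℝ) ≤ x := le_trans zero_le_one hx.1.le
      have hxle : x ^ D ≤ (((D:ℝ) + 1) / D) ^ D := pow_le_pow_left₀ hx0 hx.2.le D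
      have hb' : ((b:ℕ):ℝ) = (D:ℝ) + 1 := by rw [hbdef]; push_cast; ring
      rw [hb']
      rcases eq_or_lt_of_le hg0 with hgz | hgpos
      · rw [← hgz]; norm_num
      · have h1 : g * (((D:ℝ) + 1) * x ^ D) ≤ g * (((D:ℝ) + 1) * (((D:ℝ)+1)/D) ^ D) := by
          apply mul_le_mul_of_nonneg_left _ hg0
          apply mul_le_mul_of_nonneg_left hxle (by positivity)
        have h2 : g * (((D:ℝ) + 1) * (((D:ℝ)+1)/D) ^ D)
            < ((D : ℝ) ^ D / ((D : ℝ) + 1) ^ (D + 1)) * (((D:ℝ) + 1) * (((D:ℝ)+1)/D) ^ D) := by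
          apply mul_lt_mul_of_pos_right hglt (by positivity)
        rw [hkey1] at h2
        linarith
  have hLmem : L ∈ Set.Icc (1:ℝ) (((D : ℝ) + 1) / D) := ⟨hL1, le_trans hLX hX2⟩
  have hXmem : X ∈ Set.Icc (1:ℝ) (((D : ℝ) + 1) / D) := ⟨hX1, hX2⟩
  have hLX2 : L = X := by
    apply hmono.injOn hLmem hXmem
    simp only
    linarith [hLeq, hXeq]
  rw [← hLX2]
  exact hhs



lemma fussCatalan_nonneg (D p : ℕ) : 0 ≤ fussCatalan D p := by
  rw [fussCatalan_eq_fcA]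
  exact fcA_nonneg _ _ _

lemma key_hasSum' (D : ℕ) (hD : 1 ≤ D) (g X : ℝ) (hg0 : 0 ≤ g)
    (hglt : g < (D : ℝ) ^ D / ((D : ℝ) + 1) ^ (D + 1)) (hX1 : 1 ≤ X)
    (hX2 : X ≤ ((D : ℝ) + 1) / D) (hXeq : X = 1 + g * X ^ (D + 1)) :
    HasSum (fun k => fussCatalan D k * g ^ k) X := by
  have h := key_hasSum D hD g X hg0 hglt hX1 hX2 hXeq
  have he : (fun k => fussCatalan D k * g ^ k) = fun k => fcA (D + 1) 1 k * g ^ k :=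
    funext fun k => by rw [fussCatalan_eq_fcA]
  rwa [he]

/-- `ψ(x) = (x-1)/x^(D+1)`, the inverse function of the melonic 2-point function. -/
noncomputable def psiFn (D : ℕ) (x : ℝ) : ℝ := (x - 1) / x ^ (D + 1)

lemma psiFn_hasDerivAt (D : ℕ) (x : ℝ) (hx : x ≠ 0) :
    HasDerivAt (psiFn D) ((((D : ℝ) + 1) - D * x) / x ^ (D + 2)) x := by
  unfold psiFn
  have h : HasDerivAt (fun y : ℝ => (y - 1) / y ^ (D + 1))
      ((1 * x ^ (D + 1) - (x - 1) * ((D + 1 : ℕ) * x ^ (D + 1 - 1))) / (x ^ (D + 1)) ^ 2) x :=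
    ((hasDerivAt_id x).sub_const 1).div (hasDerivAt_pow (D + 1) x) (pow_ne_zero _ hx)
  convert h using 1
  have hD1 : D + 1 - 1 = D := by omega
  rw [hD1]
  rw [div_eq_div_iff (by positivity) (by positivity)]
  push_cast
  ring

section helpers

variable {D : ℕ}

lemma hD0 (hD : 1 ≤ D) : (0:ℝ) < (D:ℝ) := by exact_mod_cast Nat.lt_of_lt_of_le Nat.zero_lt_one hD

lemma gc_pos (hD : 1 ≤ D) : (0:ℝ) < (D : ℝ) ^ D / ((D : ℝ) + 1) ^ (D + 1) := by
  have := hD0 hD; positivity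

lemma Gs_gt_one (hD : 1 ≤ D) : (1:ℝ) < ((D : ℝ) + 1) / D := by
  have h := hD0 hD
  rw [lt_div_iff₀ h]; linarith

lemma idB (hD : 1 ≤ D) : ((D : ℝ) ^ D / ((D : ℝ) + 1) ^ (D + 1)) * (((D:ℝ) + 1) * (((D : ℝ) + 1) / D) ^ D) = 1 := by
  have h := hD0 hD
  rw [div_pow, pow_succ]
  field_simp

lemma idA (hD : 1 ≤ D) : ((D : ℝ) ^ D / ((D : ℝ) + 1) ^ (D + 1)) * ((((D : ℝ) + 1) / D) ^ (D+1)) = 1/(D:ℝ) := by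
  have h := hD0 hD
  rw [div_pow, pow_succ, pow_succ]
  field_simp

lemma psiFn_Gs (hD : 1 ≤ D) : psiFn D (((D : ℝ) + 1) / D) = (D : ℝ) ^ D / ((D : ℝ) + 1) ^ (D + 1) := by
  have h := hD0 hD
  have h2 := idA hD
  unfold psiFn
  have hGs : (((D : ℝ) + 1) / D) ^ (D+1) ≠ 0 := by positivity
  rw [div_eq_iff hGs]
  have : ((D : ℝ) + 1) / D - 1 = 1/(D:ℝ) := by field_simp; ring
  rw [this, ← h2]

lemma psiFn_strictMono (hD : 1 ≤ D) : StrictMonoOn (psiFn D) (Set.Icc 1 (((D : ℝ) + 1) / D)) := by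
  apply strictMonoOn_of_deriv_pos (convex_Icc _ _)
  · apply ContinuousOn.div
    · exact (continuous_id.sub continuous_const).continuousOn
    · exact (continuous_pow _).continuousOn
    · intro x hx
      have : (0:ℝ) < x := lt_of_lt_of_le zero_lt_one hx.1
      positivity
  · intro x hx
    rw [interior_Icc, Set.mem_Ioo] at hx
    have hx0 : (0:ℝ) < x := lt_trans zero_lt_one hx.1
    rw [(psiFn_hasDerivAt D x hx0.ne').deriv]
    have hD' := hD0 hD
    have hnum : 0 < ((D : ℝ) + 1) - D * x := by
      have : (D:ℝ) * x < D * (((D : ℝ) + 1) / D) := by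
        apply mul_lt_mul_of_pos_left hx.2 hD'
      rw [mul_div_cancel₀ _ hD'.ne'] at this
      linarith
    positivity

end helpers

section limitlemma

variable {D : ℕ}

lemma deltaP_pos (hD : 1 ≤ D) {x : ℝ} (hx : x < ((D : ℝ) + 1) / D) :
    0 < ((D : ℝ) + 1) - D * x := by
  have hD' := hD0 hD
  have : (D:ℝ) * x < D * (((D : ℝ) + 1) / D) := mul_lt_mul_of_pos_left hx hD'
  rw [mul_div_cancel₀ _ hD'.ne'] at this
  linarith

/-- The key L'Hôpital computation:
`(g_c - ψ(x)) / ((D+1) - D x)² → g_c · D / (2(D+1))` as `x → G_*⁻`. -/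
lemma tendsto_A (hD : 1 ≤ D) :
    Tendsto (fun x => (((D : ℝ) ^ D / ((D : ℝ) + 1) ^ (D + 1)) - psiFn D x) /
        (((D : ℝ) + 1) - D * x) ^ 2)
      (nhdsWithin (((D : ℝ) + 1) / D) (Set.Iio (((D : ℝ) + 1) / D)))
      (nhds (((D : ℝ) ^ D / ((D : ℝ) + 1) ^ (D + 1)) * ((D : ℝ) / (2 * ((D : ℝ) + 1))))) := by
  set gc : ℝ := (D : ℝ) ^ D / ((D : ℝ) + 1) ^ (D + 1) with hgc
  set Gs : ℝ := ((D : ℝ) + 1) / D with hGs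
  have hD' := hD0 hD
  have hgcpos := gc_pos hD
  have hGs1 := Gs_gt_one hD
  have hGspos : (0:ℝ) < Gs := lt_trans zero_lt_one hGs1
  have hDGs : (D:ℝ) * Gs = (D:ℝ) + 1 := by rw [hGs]; field_simp
  have hidA := idA hD
  have hidB := idB hD
  rw [← hgc, ← hGs] at hidA hidB
  have hGsm1 : Gs - 1 = 1/(D:ℝ) := by rw [hGs]; field_simp; ring
  -- the polynomial limit, by two rounds of L'Hôpital
  have hpoly : Tendsto (fun x : ℝ => (gc * x ^ (D+1) - x + 1) / (((D : ℝ) + 1) - D * x) ^ 2)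
      (nhdsWithin Gs (Set.Iio Gs))
      (nhds (gc * ((D:ℝ)+1) * ((D:ℝ) * Gs ^ (D-1)) / (2 * (D:ℝ)^2))) := by
    have hf' : ∀ x : ℝ, HasDerivAt (fun x : ℝ => gc * x ^ (D+1) - x + 1)
        (gc * ((D:ℝ)+1) * x ^ D - 1) x := by
      intro x
      have h := (((hasDerivAt_pow (D+1) x).const_mul gc).sub (hasDerivAt_id x)).add_const 1
      refine h.congr_deriv ?_
      have hD1 : D + 1 - 1 = D := by omega
      rw [hD1]
      push_cast
      ring
    have hg' : ∀ x : ℝ, HasDerivAt (fun x : ℝ => (((D : ℝ) + 1) - D * x) ^ 2)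
        ((((D : ℝ) + 1) - D * x) * (-2 * D)) x := by
      intro x
      have h := (((hasDerivAt_id x).const_mul (D:ℝ)).const_sub ((D:ℝ)+1)).pow 2
      refine h.congr_deriv ?_
      norm_num
      ring
    apply HasDerivAt.lhopital_zero_nhdsLT
      (Filter.Eventually.of_forall fun x => hf' x)
      (Filter.Eventually.of_forall fun x => hg' x)
    · -- g' ≠ 0 near Gs from the left
      filter_upwards [self_mem_nhdsWithin] with x hx
      have hpos := deltaP_pos hD (hx : x < Gs)
      have hneg : (((D : ℝ) + 1) - D * x) * (-2 * D) < 0 := by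
        apply mul_neg_of_pos_of_neg hpos
        have : (0:ℝ) < 2 * D := by positivity
        linarith
      exact ne_of_lt hneg
    · -- f → 0
      have hc : ContinuousAt (fun x : ℝ => gc * x ^ (D+1) - x + 1) Gs := by fun_prop
      have hval : gc * Gs ^ (D+1) - Gs + 1 = 0 := by
        have h1 : gc * Gs ^ (D+1) = 1/(D:ℝ) := hidA
        linarith [hGsm1]
      refine Tendsto.mono_left ?_ nhdsWithin_le_nhds
      simpa [hval] using hc.tendsto
    · -- g → 0
      have hc : ContinuousAt (fun x : ℝ => (((D : ℝ) + 1) - D * x) ^ 2) Gs := by fun_prop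
      have hval : (((D : ℝ) + 1) - D * Gs) ^ 2 = 0 := by
        rw [show ((D : ℝ) + 1) - D * Gs = 0 by linarith [hDGs]]
        norm_num
      refine Tendsto.mono_left ?_ nhdsWithin_le_nhds
      simpa [hval] using hc.tendsto
    · -- second L'Hôpital for f'/g'
      have hf'' : ∀ x : ℝ, HasDerivAt (fun x : ℝ => gc * ((D:ℝ)+1) * x ^ D - 1)
          (gc * ((D:ℝ)+1) * ((D:ℝ) * x ^ (D-1))) x := fun x =>
        ((hasDerivAt_pow D x).const_mul (gc * ((D:ℝ)+1))).sub_const 1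
      have hg'' : ∀ x : ℝ, HasDerivAt (fun x : ℝ => (((D : ℝ) + 1) - D * x) * (-2 * D))
          (2 * (D:ℝ)^2) x := by
        intro x
        have h := ((((hasDerivAt_id x).const_mul (D:ℝ)).const_sub ((D:ℝ)+1)).mul_const
          (-2 * (D:ℝ)))
        refine h.congr_deriv ?_
        ring
      apply HasDerivAt.lhopital_zero_nhdsLT
        (Filter.Eventually.of_forall fun x => hf'' x)
        (Filter.Eventually.of_forall fun x => hg'' x)
      · filter_upwards with x
        have : (0:ℝ) < 2 * (D:ℝ)^2 := by positivity
        exact ne_of_gt this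
      · -- f' → 0
        have hc : ContinuousAt (fun x : ℝ => gc * ((D:ℝ)+1) * x ^ D - 1) Gs := by fun_prop
        have hval : gc * ((D:ℝ)+1) * Gs ^ D - 1 = 0 := by rw [mul_assoc, hidB]; ring
        refine Tendsto.mono_left ?_ nhdsWithin_le_nhds
        have h : Tendsto (fun x : ℝ => gc * ((D:ℝ)+1) * x ^ D - 1) (nhds Gs)
            (nhds (gc * ((D:ℝ)+1) * Gs ^ D - 1)) := hc.tendsto
        rwa [hval] at h
      · -- g' → 0
        have hc : ContinuousAt (fun x : ℝ => (((D : ℝ) + 1) - D * x) * (-2 * D)) Gs := by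
          fun_prop
        have hval : (((D : ℝ) + 1) - D * Gs) * (-2 * (D:ℝ)) = 0 := by
          rw [show ((D : ℝ) + 1) - D * Gs = 0 by linarith [hDGs]]
          ring
        refine Tendsto.mono_left ?_ nhdsWithin_le_nhds
        have h : Tendsto (fun x : ℝ => (((D : ℝ) + 1) - D * x) * (-2 * D)) (nhds Gs)
            (nhds ((((D : ℝ) + 1) - D * Gs) * (-2 * (D:ℝ)))) := hc.tendsto
        rwa [hval] at h
      · -- f''/g'' → limit, by continuity
        have hc : ContinuousAt
            (fun x : ℝ => gc * ((D:ℝ)+1) * ((D:ℝ) * x ^ (D-1)) / (2 * (D:ℝ)^2)) Gs := by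
          fun_prop
        exact Tendsto.mono_left hc.tendsto nhdsWithin_le_nhds
  -- combine with the continuous factor (x^(D+1))⁻¹
  have h2 : Tendsto (fun x : ℝ => (x^(D+1))⁻¹) (nhdsWithin Gs (Set.Iio Gs))
      (nhds ((Gs^(D+1))⁻¹)) := by
    have hc : ContinuousAt (fun x : ℝ => (x^(D+1))⁻¹) Gs :=
      ((continuous_pow (D+1)).continuousAt).inv₀ (pow_ne_zero _ hGspos.ne')
    exact hc.tendsto.mono_left nhdsWithin_le_nhds
  have h3 := hpoly.mul h2
  -- identify the limit value
  have hval3 : gc * ((D:ℝ)+1) * ((D:ℝ) * Gs ^ (D-1)) / (2 * (D:ℝ)^2) * (Gs^(D+1))⁻¹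
      = gc * ((D : ℝ) / (2 * ((D : ℝ) + 1))) := by
    obtain ⟨e, rfl⟩ : ∃ e, D = e + 1 := ⟨D - 1, by omega⟩
    have he1 : e + 1 - 1 = e := by omega
    have he2 : e + 1 + 1 = e + 2 := by omega
    rw [he1, he2, pow_add]
    rw [hGs]
    have h0 : ((e:ℝ) + 1) ≠ 0 := by positivity
    have h1 : ((e:ℝ) + 1 + 1) ≠ 0 := by positivity
    have h2 : (((e:ℝ) + 1 + 1) / ((e:ℝ)+1)) ^ e ≠ 0 := by positivity
    push_cast
    field_simp
  rw [hval3] at h3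
  -- eventual equality with the target function
  apply h3.congr'
  filter_upwards [self_mem_nhdsWithin,
    mem_nhdsWithin_of_mem_nhds (Ioi_mem_nhds hGspos)] with x hx hx0
  have hxz : x ≠ 0 := ne_of_gt hx0
  have hxpow : x ^ (D+1) ≠ 0 := pow_ne_zero _ hxz
  have hδ : ((D:ℝ)+1) - D * x ≠ 0 := ne_of_gt (deltaP_pos hD hx)
  unfold psiFn
  field_simp
  ring

/-- Let `D ≥ 1`, `g_c := D^D/(D+1)^(D+1)`, `G_LO` the leading-order melonic
2-point function, and `E_LO(g) := Σ_{p≥1} (C_p^(D+1)/p)·g^p` the leading-order free energy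
on `[0, g_c)`; it satisfies `g·E_LO'(g) = G_LO(g) − 1`, and
`lim_{g→g_c⁻} √(1 − g/g_c) · E_LO''(g) = (1/g_c)·((D+1)/D)^(D+2)·√(D/(2(D+1)))`,
i.e. the susceptibility exponent is `γ_LO = 1/2`. -/
theorem melonic_free_energy_critical_behaviour (D : ℕ) (hD : 1 ≤ D) (G_LO E_LO : ℝ → ℝ)
    (hG : ∀ g ∈ Set.Icc (0 : ℝ) ((D : ℝ) ^ D / ((D : ℝ) + 1) ^ (D + 1)),
      G_LO g ∈ Set.Icc (1 : ℝ) (((D : ℝ) + 1) / D) ∧ G_LO g = 1 + g * (G_LO g) ^ (D + 1))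
    (hE : ∀ g ∈ Set.Ico (0 : ℝ) ((D : ℝ) ^ D / ((D : ℝ) + 1) ^ (D + 1)),
      HasSum (fun p : ℕ => fussCatalan D (p + 1) / ((p : ℝ) + 1) * g ^ (p + 1)) (E_LO g)) :
    (∀ g ∈ Set.Ioo (0 : ℝ) ((D : ℝ) ^ D / ((D : ℝ) + 1) ^ (D + 1)),
      g * deriv E_LO g = G_LO g - 1) ∧
    Filter.Tendsto
      (fun g : ℝ => Real.sqrt (1 - g / ((D : ℝ) ^ D / ((D : ℝ) + 1) ^ (D + 1))) *
        deriv (deriv E_LO) g)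
      (nhdsWithin ((D : ℝ) ^ D / ((D : ℝ) + 1) ^ (D + 1))
        (Set.Iio ((D : ℝ) ^ D / ((D : ℝ) + 1) ^ (D + 1))))
      (nhds ((1 / ((D : ℝ) ^ D / ((D : ℝ) + 1) ^ (D + 1))) *
        (((D : ℝ) + 1) / D) ^ (D + 2) * Real.sqrt ((D : ℝ) / (2 * ((D : ℝ) + 1))))) := by
  have hD' : (0:ℝ) < D := hD0 hD
  set gc : ℝ := (D : ℝ) ^ D / ((D : ℝ) + 1) ^ (D + 1) with hgc
  set Gs : ℝ := ((D : ℝ) + 1) / D with hGs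
  have hgcpos : 0 < gc := gc_pos hD
  have hGs1 : 1 < Gs := Gs_gt_one hD
  have hGspos : 0 < Gs := by linarith
  have hpsiGs : psiFn D Gs = gc := psiFn_Gs hD
  have hmonoψ : StrictMonoOn (psiFn D) (Set.Icc 1 Gs) := psiFn_strictMono hD
  have hGsmem : Gs ∈ Set.Icc (1:ℝ) Gs := ⟨hGs1.le, le_refl Gs⟩
  have hGmem : ∀ g, 0 ≤ g → g ≤ gc → G_LO g ∈ Set.Icc (1:ℝ) Gs :=
    fun g h1 h2 => (hG g ⟨h1, h2⟩).1
  have hGeq : ∀ g, 0 ≤ g → g ≤ gc → G_LO g = 1 + g * (G_LO g) ^ (D + 1) :=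
    fun g h1 h2 => (hG g ⟨h1, h2⟩).2
  have hGpos : ∀ g, 0 ≤ g → g ≤ gc → (0:ℝ) < G_LO g :=
    fun g h1 h2 => lt_of_lt_of_le zero_lt_one (hGmem g h1 h2).1
  have hpsiG : ∀ g, 0 ≤ g → g ≤ gc → psiFn D (G_LO g) = g := by
    intro g h1 h2
    have h3 := hGeq g h1 h2
    have h4 := hGpos g h1 h2
    unfold psiFn
    rw [div_eq_iff (pow_ne_zero _ h4.ne')]
    linarith [h3]
  have hGlt : ∀ g, 0 ≤ g → g < gc → G_LO g < Gs := by
    intro g h1 h2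
    rcases lt_or_eq_of_le (hGmem g h1 h2.le).2 with h | h
    · exact h
    · exfalso
      have h5 := hpsiG g h1 h2.le
      rw [h, hpsiGs] at h5
      linarith
  have hGgt1 : ∀ g, 0 < g → g ≤ gc → 1 < G_LO g := by
    intro g h1 h2
    have h3 := hGeq g h1.le h2
    have h4 := hGpos g h1.le h2
    nlinarith [pow_pos h4 (D+1)]
  -- continuity of G_LO on (0, gc)
  have hcont : ∀ g, 0 < g → g < gc → ContinuousAt G_LO g := by
    intro g hg0 hglt
    have hIoo : Set.Ioo (0:ℝ) gc ∈ nhds g := Ioo_mem_nhds hg0 hglt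
    rw [ContinuousAt, tendsto_order]
    constructor
    · intro x hx
      rcases lt_or_ge x 1 with hx1 | hx1
      · filter_upwards [hIoo] with y hy
        exact lt_of_lt_of_le hx1 (hGmem y hy.1.le hy.2.le).1
      · have hxmem : x ∈ Set.Icc (1:ℝ) Gs := ⟨hx1, le_trans hx.le (hGmem g hg0.le hglt.le).2⟩
        have hpx : psiFn D x < g := by
          have h := hmonoψ hxmem (hGmem g hg0.le hglt.le) hx
          rwa [hpsiG g hg0.le hglt.le] at h
        filter_upwards [hIoo, Ioi_mem_nhds hpx] with y hy hy2
        by_contra hcon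
        push_neg at hcon
        have h5 := hmonoψ.monotoneOn (hGmem y hy.1.le hy.2.le) hxmem hcon
        rw [hpsiG y hy.1.le hy.2.le] at h5
        have : psiFn D x < y := hy2
        linarith
    · intro x hx
      rcases le_or_gt x Gs with hxGs | hxGs
      · have hxmem : x ∈ Set.Icc (1:ℝ) Gs :=
          ⟨le_trans (hGmem g hg0.le hglt.le).1 hx.le, hxGs⟩
        have hpx : g < psiFn D x := by
          have h := hmonoψ (hGmem g hg0.le hglt.le) hxmem hx
          rwa [hpsiG g hg0.le hglt.le] at h
        filter_upwards [hIoo, Iio_mem_nhds hpx] with y hy hy2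
        by_contra hcon
        push_neg at hcon
        have h5 := hmonoψ.monotoneOn hxmem (hGmem y hy.1.le hy.2.le) hcon
        rw [hpsiG y hy.1.le hy.2.le] at h5
        have : y < psiFn D x := hy2
        linarith
      · filter_upwards [hIoo] with y hy
        exact lt_of_le_of_lt (hGmem y hy.1.le hy.2.le).2 hxGs
  -- derivative of G_LO
  have hGd : ∀ g, 0 < g → g < gc → HasDerivAt G_LO
      (((((D:ℝ)+1) - D * G_LO g) / (G_LO g)^(D+2))⁻¹) g := by
    intro g hg0 hglt
    have hxpos := hGpos g hg0.le hglt.le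
    have hδ : 0 < ((D:ℝ)+1) - D * G_LO g := deltaP_pos hD (hGlt g hg0.le hglt)
    apply HasDerivAt.of_local_left_inverse (hcont g hg0 hglt)
      (psiFn_hasDerivAt D (G_LO g) hxpos.ne')
    · exact ne_of_gt (div_pos hδ (by positivity))
    · filter_upwards [Ioo_mem_nhds hg0 hglt] with y hy
      exact hpsiG y hy.1.le hy.2.le
  -- the melonic generating function identity
  have hKey : ∀ g, 0 ≤ g → g < gc → HasSum (fun k => fussCatalan D k * g ^ k) (G_LO g) :=
    fun g h1 h2 => key_hasSum' D hD g (G_LO g) h1 h2 (hGmem g h1 h2.le).1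
      (hGmem g h1 h2.le).2 (hGeq g h1 h2.le)
  have hfussnonneg : ∀ p, 0 ≤ fussCatalan D p := fussCatalan_nonneg D
  -- derivative of E_LO
  have hE' : ∀ g, 0 < g → g < gc → HasDerivAt E_LO ((G_LO g - 1)/g) g := by
    intro g hg0 hglt
    set r : ℝ := (g + gc)/2 with hr
    have hgr : g < r := by rw [hr]; linarith
    have hrgc : r < gc := by rw [hr]; linarith
    have hr0 : (0:ℝ) < r := by rw [hr]; linarith
    have hsum_r := hKey r hr0.le hrgc
    have hshift : Summable (fun p : ℕ => fussCatalan D (p+1) * r^(p+1)) :=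
      (summable_nat_add_iff 1).2 hsum_r.summable
    have hu : Summable (fun p : ℕ => fussCatalan D (p+1) * r^p) := by
      have h := hshift.mul_left r⁻¹
      have he : (fun p : ℕ => r⁻¹ * (fussCatalan D (p+1) * r^(p+1)))
          = fun p : ℕ => fussCatalan D (p+1) * r^p := by
        funext p
        rw [pow_succ]
        field_simp
      rwa [he] at h
    have hder : ∀ (p : ℕ) (y : ℝ), y ∈ Set.Ioo (-r) r →
        HasDerivAt (fun z : ℝ => fussCatalan D (p+1) / ((p:ℝ)+1) * z^(p+1))
          (fussCatalan D (p+1) * y^p) y := by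
      intro p y _
      have h := (hasDerivAt_pow (p+1) y).const_mul (fussCatalan D (p+1) / ((p:ℝ)+1))
      refine h.congr_deriv ?_
      have hp1 : ((p:ℝ)+1) ≠ 0 := by positivity
      have hps : p + 1 - 1 = p := by omega
      rw [hps]
      push_cast
      field_simp
    have hbound : ∀ (p : ℕ) (y : ℝ), y ∈ Set.Ioo (-r) r →
        ‖fussCatalan D (p+1) * y^p‖ ≤ fussCatalan D (p+1) * r^p := by
      intro p y hy
      rw [norm_mul, norm_pow, Real.norm_of_nonneg (hfussnonneg (p+1))]
      apply mul_le_mul_of_nonneg_left _ (hfussnonneg (p+1))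
      apply pow_le_pow_left₀ (norm_nonneg y) _ p
      rw [Real.norm_eq_abs, abs_le]
      exact ⟨hy.1.le, hy.2.le⟩
    have hmem : g ∈ Set.Ioo (-r) r := ⟨by linarith, hgr⟩
    have hsum_g0 : Summable (fun p : ℕ => fussCatalan D (p+1) / ((p:ℝ)+1) * g^(p+1)) :=
      (hE g ⟨hg0.le, hglt⟩).summable
    have hdiff := hasDerivAt_tsum_of_isPreconnected hu isOpen_Ioo
      (convex_Ioo (-r) r).isPreconnected hder hbound hmem hsum_g0 hmem
    have heqE : E_LO =ᶠ[nhds g]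
        (fun z => ∑' p : ℕ, fussCatalan D (p+1) / ((p:ℝ)+1) * z^(p+1)) := by
      filter_upwards [Ioo_mem_nhds hg0 hglt] with y hy
      exact ((hE y ⟨hy.1.le, hy.2⟩).tsum_eq).symm
    have hsum_g := hKey g hg0.le hglt
    have hshift2 : HasSum (fun p : ℕ => fussCatalan D (p+1) * g^(p+1)) (G_LO g - 1) := by
      refine (hasSum_nat_add_iff (f := fun k => fussCatalan D k * g ^ k) 1).2 ?_
      have h0 : fussCatalan D 0 = 1 := by norm_num [fussCatalan]
      simpa [h0] using hsum_g
    have hmul : HasSum (fun p : ℕ => fussCatalan D (p+1) * g^p) ((G_LO g - 1)/g) := by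
      have h := hshift2.mul_left g⁻¹
      have he : (fun p : ℕ => g⁻¹ * (fussCatalan D (p+1) * g^(p+1)))
          = fun p : ℕ => fussCatalan D (p+1) * g^p := by
        funext p
        rw [pow_succ]
        field_simp
      rw [he] at h
      have he2 : (G_LO g - 1)/g = g⁻¹ * (G_LO g - 1) := by ring
      rwa [he2]
    rw [hmul.tsum_eq] at hdiff
    exact hdiff.congr_of_eventuallyEq heqE
  -- Part 1
  have part1 : ∀ g ∈ Set.Ioo (0:ℝ) gc, g * deriv E_LO g = G_LO g - 1 := by
    intro g hg
    rw [(hE' g hg.1 hg.2).deriv, mul_comm, div_mul_cancel₀ _ (ne_of_gt hg.1)]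
  -- second derivative
  have hsecond : ∀ g, 0 < g → g < gc → deriv (deriv E_LO) g =
      ((((((D:ℝ)+1) - D * G_LO g) / (G_LO g)^(D+2))⁻¹) * g - (G_LO g - 1) * 1) / g^2 := by
    intro g hg0 hglt
    have heq : deriv E_LO =ᶠ[nhds g] fun y => (G_LO y - 1)/y := by
      filter_upwards [Ioo_mem_nhds hg0 hglt] with y hy
      exact (hE' y hy.1 hy.2).deriv
    rw [heq.deriv_eq]
    exact (((hGd g hg0 hglt).sub_const 1).div (hasDerivAt_id' g) (ne_of_gt hg0)).deriv
  refine ⟨part1, ?_⟩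
  -- the limit function
  set Φ : ℝ → ℝ := fun x => Real.sqrt ((gc - psiFn D x) / (((D:ℝ)+1) - D * x)^2) *
      ((psiFn D x * x^(D+2) - (x - 1) * (((D:ℝ)+1) - D * x)) /
        (Real.sqrt gc * (psiFn D x)^2)) with hΦ
  have hψc : ContinuousAt (psiFn D) Gs := (psiFn_hasDerivAt D Gs hGspos.ne').continuousAt
  have hTΦ : Tendsto Φ (nhdsWithin Gs (Set.Iio Gs))
      (nhds ((1/gc) * Gs^(D+2) * Real.sqrt ((D:ℝ)/(2*((D:ℝ)+1))))) := by
    have hA := tendsto_A hD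
    rw [← hgc, ← hGs] at hA
    have hsq := (Real.continuous_sqrt.continuousAt
      (x := gc * ((D:ℝ)/(2*((D:ℝ)+1))))).tendsto.comp hA
    have hBf : ContinuousAt (fun x => (psiFn D x * x^(D+2) - (x - 1) * (((D:ℝ)+1) - D * x)) /
        (Real.sqrt gc * (psiFn D x)^2)) Gs := by
      apply ContinuousAt.div
      · exact (hψc.mul (continuous_pow (D+2)).continuousAt).sub
          (((continuous_id.sub continuous_const).continuousAt).mul
            ((continuous_const.sub (continuous_const.mul continuous_id)).continuousAt))
      · exact continuousAt_const.mul (hψc.pow 2)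
      · show Real.sqrt gc * (psiFn D Gs)^2 ≠ 0
        rw [hpsiGs]
        have := Real.sqrt_pos.mpr hgcpos
        positivity
    have hB : Tendsto (fun x => (psiFn D x * x^(D+2) - (x - 1) * (((D:ℝ)+1) - D * x)) /
        (Real.sqrt gc * (psiFn D x)^2)) (nhdsWithin Gs (Set.Iio Gs))
        (nhds ((psiFn D Gs * Gs^(D+2) - (Gs - 1) * (((D:ℝ)+1) - D * Gs)) /
          (Real.sqrt gc * (psiFn D Gs)^2))) :=
      Tendsto.mono_left hBf.tendsto nhdsWithin_le_nhds
    have hmul := hsq.mul hB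
    have hδGs : ((D:ℝ)+1) - D * Gs = 0 := by rw [hGs]; field_simp; ring
    have hval : Real.sqrt (gc * ((D:ℝ)/(2*((D:ℝ)+1)))) *
        ((psiFn D Gs * Gs^(D+2) - (Gs - 1) * (((D:ℝ)+1) - D * Gs)) /
          (Real.sqrt gc * (psiFn D Gs)^2))
        = (1/gc) * Gs^(D+2) * Real.sqrt ((D:ℝ)/(2*((D:ℝ)+1))) := by
      rw [hpsiGs, hδGs, Real.sqrt_mul hgcpos.le]
      have hsgc : Real.sqrt gc ≠ 0 := ne_of_gt (Real.sqrt_pos.mpr hgcpos)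
      field_simp
      ring
    rw [hval] at hmul
    apply hmul.congr
    intro x
    simp only [Function.comp_apply]
    rfl
  -- G_LO tends to Gs from the left
  have hev : ∀ᶠ y in nhdsWithin gc (Set.Iio gc), y ∈ Set.Ioo (0:ℝ) gc := by
    filter_upwards [self_mem_nhdsWithin,
      mem_nhdsWithin_of_mem_nhds (Ioi_mem_nhds hgcpos)] with y h1 h2
    exact ⟨h2, h1⟩
  have htendsG : Tendsto G_LO (nhdsWithin gc (Set.Iio gc)) (nhdsWithin Gs (Set.Iio Gs)) := by
    rw [tendsto_nhdsWithin_iff]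
    constructor
    · rw [tendsto_order]
      constructor
      · intro x hx
        rcases lt_or_ge x 1 with hx1 | hx1
        · filter_upwards [hev] with y hy
          exact lt_of_lt_of_le hx1 (hGmem y hy.1.le hy.2.le).1
        · have hxmem : x ∈ Set.Icc (1:ℝ) Gs := ⟨hx1, hx.le⟩
          have hpx : psiFn D x < gc := by
            have h := hmonoψ hxmem hGsmem hx
            rwa [hpsiGs] at h
          filter_upwards [hev, mem_nhdsWithin_of_mem_nhds (Ioi_mem_nhds hpx)] with y hy hy2
          by_contra hcon
          push_neg at hcon
          have h5 := hmonoψ.monotoneOn (hGmem y hy.1.le hy.2.le) hxmem hcon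
          rw [hpsiG y hy.1.le hy.2.le] at h5
          have : psiFn D x < y := hy2
          linarith
      · intro x hx
        filter_upwards [hev] with y hy
        exact lt_of_le_of_lt (hGmem y hy.1.le hy.2.le).2 hx
    · filter_upwards [hev] with y hy
      exact hGlt y hy.1.le hy.2
  have hfinal := hTΦ.comp htendsG
  apply hfinal.congr'
  filter_upwards [hev] with y hy
  have hx1 : 1 < G_LO y := hGgt1 y hy.1 hy.2.le
  have hxGs : G_LO y < Gs := hGlt y hy.1.le hy.2
  have hψy : psiFn D (G_LO y) = y := hpsiG y hy.1.le hy.2.le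
  have hδ : 0 < ((D:ℝ)+1) - D * G_LO y := deltaP_pos hD hxGs
  have hy0 : (0:ℝ) < y := hy.1
  show Φ (G_LO y) = Real.sqrt (1 - y/gc) * deriv (deriv E_LO) y
  rw [hsecond y hy.1 hy.2, hΦ]
  simp only []
  rw [hψy]
  have h1 : Real.sqrt ((gc - y) / (((D:ℝ)+1) - D * G_LO y)^2)
      = Real.sqrt (gc - y) / (((D:ℝ)+1) - D * G_LO y) := by
    rw [Real.sqrt_div (by linarith [hy.2] : (0:ℝ) ≤ gc - y), Real.sqrt_sq hδ.le]
  have h2 : Real.sqrt (1 - y/gc) = Real.sqrt (gc - y) / Real.sqrt gc := by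
    rw [show 1 - y/gc = (gc - y)/gc by field_simp,
      Real.sqrt_div (by linarith [hy.2] : (0:ℝ) ≤ gc - y)]
  rw [h1, h2]
  have hxpos : (0:ℝ) < G_LO y := by linarith
  have hsgc : Real.sqrt gc ≠ 0 := ne_of_gt (Real.sqrt_pos.mpr hgcpos)
  field_simp
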